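/- Proposition 1 (prefix indistinguishability): consider the family of prefix-commitment MDPs indexed by β ∈ {true, false}, where in instance β the terminal reward 1 is earned by initial action L if β = true and by initial action R if β = false, with the chain states, transitions, and all other rewards unchanged. The collection of observable length-H windows (those with start time t ≥ 1 and t + H ≤ H+1) is the same in both instances and under both initial actions. Therefore, for every decision rule D mapping collections of length-H windows to an action in {L, R}, there exists β ∈ {true, false} such that in instance β the action selected by D achieves full-horizon return 0 while the other action achieves return 1; i.e., no decision rule depending only on length-H windows is guaranteed to select the optimal initial action. -/
import Mathlib


/-!
Proposition 1 (prefix indistinguishability): a family of prefix-commitment MDPs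
indexed by `β : Bool`, where the terminal reward `1` is earned by initial action
`L` if `β = true` and by `R` if `β = false`.  Actions are encoded by `Bool`
(`true ↦ L`, `false ↦ R`).
-/

/-- States: `Sum.inl t` is the chain state `s_t`, `Sum.inr true` is `g`,
`Sum.inr false` is `b`. -/
abbrev PCState : Type := ℕ ⊕ Bool

/-- Trajectory induced by an initial action `a : Bool` (`true ↦ L`): the shared
chain `s_0, …, s_{H+1}` followed by `g` under `L` and by `b` under `R`.  The
trajectories do not depend on the instance `β`. -/
def traj (H : ℕ) (a : Bool) (t : ℕ) : PCState :=
  if t ≤ H + 1 then Sum.inl t else Sum.inr a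

/-- Reward at step `t` in instance `β` under initial action `a`: the final
transition (step `H+1`) carries reward `1` exactly when it enters the rewarded
terminal, i.e. when `a = β`; all other rewards are `0`. -/
def rew (H : ℕ) (β a : Bool) (t : ℕ) : ℝ :=
  if t = H + 1 ∧ a = β then 1 else 0

/-- Full-horizon return in instance `β` under initial action `a`. -/
def ret (H : ℕ) (β a : Bool) : ℝ := ∑ t ∈ Finset.range (H + 2), rew H β a t

/-- The collection of observable length-`H` windows of a trajectory: the window
starting at time `t` (observable iff `1 ≤ t` and `t + H ≤ H+1`) with entries
indexed by `i ≤ H`. -/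
def obsWindows (H : ℕ) (τ : ℕ → PCState) : ℕ → ℕ → Option PCState :=
  fun t i => if 1 ≤ t ∧ t + H ≤ H + 1 ∧ i ≤ H then some (τ (t + i)) else none

/-- **Proposition 1.** The collection of observable length-`H`
windows is the same in both instances and under both initial actions.  Hence for
every decision rule `D` mapping collections of length-`H` windows to an action,
there exists an instance `β` in which the action selected by `D` achieves
full-horizon return `0` while the other action achieves return `1`: no decision
rule depending only on length-`H` windows is guaranteed to select the optimal
initial action. -/
theorem prefix_indistinguishability (H : ℕ) (hH : 1 ≤ H) :
    (∀ a a' : Bool, obsWindows H (traj H a) = obsWindows H (traj H a')) ∧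
    (∀ D : (ℕ → ℕ → Option PCState) → Bool, ∃ β : Bool,
      ret H β (D (obsWindows H (traj H true))) = 0 ∧
      ret H β (!(D (obsWindows H (traj H true)))) = 1) := by
  have hret : ∀ β a : Bool, ret H β a = if a = β then 1 else 0 := by
    intro β a
    unfold ret rew
    by_cases h : a = β
    · rw [Finset.sum_eq_single (H + 1)] <;> simp_all
    · simp [h]
  constructor
  · intro a a'
    funext t i
    unfold obsWindows traj
    by_cases h : 1 ≤ t ∧ t + H ≤ H + 1 ∧ i ≤ H
    · have : t + i ≤ H + 1 := le_trans (by omega) h.2.1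
      simp [h, this]
    · simp [h]
  · intro D
    refine ⟨!(D (obsWindows H (traj H true))), ?_, ?_⟩ <;>
      simp [hret, Bool.eq_not_self]
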